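/- Let g : F_2^n → F_2 be a function that is not affine (i.e., there are no a ∈ F_2^n and c ∈ F_2 with g(x) = ⟨a, x⟩ + c for all x; equivalently the algebraic degree of g is at least 2). Then Σ_{a ∈ F_2^n} ( Σ_{x ∈ F_2^n} (−1)^{g(x+a)+g(x)} )^2 ≤ 2^{2n} + (2^n − 1)(2^n − 4)^2, with equality if and only if there exists an affine function h : F_2^n → F_2 (h(x) = ⟨a, x⟩ + c) such that g and h differ at exactly one point of F_2^n. -/
import Mathlib

namespace FMB
open Finset

abbrev Vn (n : ℕ) := Fin n → ZMod 2

def χ (s : ZMod 2) : ℤ := (-1) ^ s.val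

lemma χ_add : ∀ s t : ZMod 2, χ (s + t) = χ s * χ t := by decide
lemma χ_sq : ∀ s : ZMod 2, χ s ^ 2 = 1 := by decide
lemma χ_zero : χ 0 = 1 := rfl
lemma χ_one : χ 1 = -1 := rfl
lemma χ_eq_ite (u w : ZMod 2) : χ (u + w) = if u = w then 1 else -1 := by
  revert u w; decide
lemma zmod2_ne_iff (u w : ZMod 2) : u ≠ w ↔ u = w + 1 := by revert u w; decide
lemma zmod2_add_self (s : ZMod 2) : s + s = 0 := by revert s; decide

variable {n : ℕ}

lemma vadd_self (x : Vn n) : x + x = 0 := funext fun i => zmod2_add_self (x i)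

lemma vadd_eq_zero_iff (x y : Vn n) : x + y = 0 ↔ x = y := by
  constructor
  · intro h
    have : x + y + y = y := by rw [h]; abel
    rwa [add_assoc, vadd_self, add_zero] at this
  · rintro rfl; exact vadd_self x

lemma card_Vn : Fintype.card (Vn n) = 2 ^ n := by simp

def dot (a x : Vn n) : ZMod 2 := ∑ i, a i * x i

lemma dot_add_right (a x y : Vn n) : dot a (x + y) = dot a x + dot a y := by
  simp [dot, mul_add, Finset.sum_add_distrib]

lemma dot_add_left (a b x : Vn n) : dot (a + b) x = dot a x + dot b x := by
  simp [dot, add_mul, Finset.sum_add_distrib]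

lemma dot_zero_right (a : Vn n) : dot a 0 = 0 := by simp [dot]

lemma sum_χ_dot (v : Vn n) :
    ∑ ω : Vn n, χ (dot ω v) = if v = 0 then (2:ℤ)^n else 0 := by
  split_ifs with h
  · subst h
    simp only [dot]
    simp [χ_zero, card_Vn]
  · obtain ⟨i0, hi0⟩ : ∃ i, v i ≠ 0 := by
      by_contra hc; push_neg at hc; exact h (funext hc)
    have hv1 : v i0 = 1 := by revert hi0; generalize v i0 = s; revert s; decide
    set e : Vn n := fun j => if j = i0 then 1 else 0 with he
    have hdote : dot e v = 1 := by
      simp [dot, he, ite_mul, hv1]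
    have key : ∀ ω, χ (dot (ω + e) v) = - χ (dot ω v) := by
      intro ω
      rw [dot_add_left, χ_add, hdote, χ_one]; ring
    have h2 : (∑ ω : Vn n, χ (dot ω v)) = ∑ ω : Vn n, χ (dot (ω + e) v) :=
      (Fintype.sum_equiv (Equiv.addRight e) (fun ω => χ (dot (ω + e) v))
        (fun ω => χ (dot ω v)) (fun ω => rfl)).symm
    have h3 : (∑ ω : Vn n, χ (dot ω v)) + (∑ ω : Vn n, χ (dot ω v)) = 0 := by
      nth_rewrite 2 [h2]
      rw [← Finset.sum_add_distrib]
      simp [key]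
    linarith


variable (g : Vn n → ZMod 2)

def W (α : Vn n) : ℤ := ∑ x, χ (g x + dot α x)
def Δ (a : Vn n) : ℤ := ∑ x, χ (g (x + a) + g x)

lemma W_sq (α : Vn n) :
    (W g α) ^ 2 = ∑ x : Vn n, ∑ y : Vn n, χ (g x + g y) * χ (dot α (x + y)) := by
  rw [sq, W, Finset.sum_mul_sum]
  refine Finset.sum_congr rfl fun x _ => Finset.sum_congr rfl fun y _ => ?_
  rw [χ_add, χ_add, χ_add, dot_add_right, χ_add]; ring

lemma parseval : ∑ α : Vn n, (W g α) ^ 2 = 2 ^ (2 * n) := by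
  have h1 : ∑ α : Vn n, (W g α) ^ 2
      = ∑ x : Vn n, ∑ y : Vn n, χ (g x + g y) * ∑ α : Vn n, χ (dot α (x + y)) := by
    rw [Finset.sum_congr rfl fun α _ => W_sq g α, Finset.sum_comm]
    refine Finset.sum_congr rfl fun x _ => ?_
    rw [Finset.sum_comm]
    exact Finset.sum_congr rfl fun y _ => (Finset.mul_sum _ _ _).symm
  have h2 : ∀ x y : Vn n, χ (g x + g y) * (∑ α : Vn n, χ (dot α (x + y)))
      = if y = x then (2:ℤ)^n else 0 := by
    intro x y
    rw [sum_χ_dot]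
    by_cases hxy : y = x
    · subst hxy
      rw [if_pos (vadd_self y), if_pos rfl, zmod2_add_self, χ_zero, one_mul]
    · rw [if_neg fun h => hxy ((vadd_eq_zero_iff x y).mp h).symm, if_neg hxy, mul_zero]
  rw [h1]
  rw [Finset.sum_congr rfl fun x _ => Finset.sum_congr rfl fun y _ => h2 x y]
  simp only [Finset.sum_ite_eq', Finset.mem_univ, if_pos, Finset.sum_const, card_Vn,
    nsmul_eq_mul]
  rw [Finset.card_univ, card_Vn]
  push_cast
  rw [← pow_add, two_mul]

def Sg : ℤ := ∑ x : Vn n, ∑ z : Vn n, ∑ y : Vn n, χ (g x + g y + g z + g (x + y + z))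

lemma W_pow4 (α : Vn n) :
    (W g α)^4 = ∑ x : Vn n, ∑ z : Vn n, ∑ y : Vn n, ∑ t : Vn n,
      χ (g x + g y + g z + g t) * χ (dot α (x + y + z + t)) := by
  have h4 : (W g α)^4 = (W g α)^2 * (W g α)^2 := by ring
  rw [h4, W_sq, Finset.sum_mul_sum]
  refine Finset.sum_congr rfl fun x _ => Finset.sum_congr rfl fun z _ => ?_
  rw [Finset.sum_mul_sum]
  refine Finset.sum_congr rfl fun y _ => Finset.sum_congr rfl fun t _ => ?_
  simp only [χ_add, dot_add_right]
  ring

lemma sum_W4 : ∑ α : Vn n, (W g α)^4 = 2 ^ n * Sg g := by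
  rw [Finset.sum_congr rfl fun α _ => W_pow4 g α]
  rw [Finset.sum_comm]
  rw [Sg, Finset.mul_sum]
  refine Finset.sum_congr rfl fun x _ => ?_
  rw [Finset.sum_comm, Finset.mul_sum]
  refine Finset.sum_congr rfl fun z _ => ?_
  rw [Finset.sum_comm, Finset.mul_sum]
  refine Finset.sum_congr rfl fun y _ => ?_
  rw [Finset.sum_comm]
  have hinner : ∀ t : Vn n,
      ∑ α : Vn n, χ (g x + g y + g z + g t) * χ (dot α (x + y + z + t))
      = if x + y + z = t then χ (g x + g y + g z + g t) * 2 ^ n else 0 := by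
    intro t
    rw [← Finset.mul_sum, sum_χ_dot]
    by_cases h : x + y + z = t
    · rw [if_pos ((vadd_eq_zero_iff _ _).mpr h), if_pos h]
    · rw [if_neg (fun hz => h ((vadd_eq_zero_iff _ _).mp hz)), if_neg h, mul_zero]
  rw [Finset.sum_congr rfl fun t _ => hinner t, Finset.sum_ite_eq]
  simp [mul_comm]

lemma sum_Δsq : ∑ a : Vn n, (Δ g a)^2 = Sg g := by
  have hΔ : ∀ a : Vn n, (Δ g a)^2
      = ∑ x : Vn n, ∑ y : Vn n, χ ((g (x + a) + g x) + (g (y + a) + g y)) := by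
    intro a
    rw [sq, Δ, Finset.sum_mul_sum]
    exact Finset.sum_congr rfl fun x _ => Finset.sum_congr rfl fun y _ => (χ_add _ _).symm
  rw [Finset.sum_congr rfl fun a _ => hΔ a, Finset.sum_comm]
  rw [Sg]
  refine Finset.sum_congr rfl fun x _ => ?_
  rw [Finset.sum_comm]
  conv_rhs => rw [Finset.sum_comm]
  refine Finset.sum_congr rfl fun y _ => ?_
  have key : ∀ z : Vn n, χ ((g (x + (x + z)) + g x) + (g (y + (x + z)) + g y))
      = χ (g x + g y + g z + g (x + y + z)) := by
    intro z
    have h1 : x + (x + z) = z := by rw [← add_assoc, vadd_self, zero_add]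
    have h2 : y + (x + z) = x + y + z := by ring
    rw [h1, h2]
    congr 1
    ring
  rw [← Equiv.sum_comp (Equiv.addLeft x)
    (fun a => χ ((g (x + a) + g x) + (g (y + a) + g y)))]
  exact Finset.sum_congr rfl fun z _ => key z

def D (α : Vn n) (c : ZMod 2) : ℕ :=
  (Finset.univ.filter (fun x => g x ≠ dot α x + c)).card

lemma sum_pm (p : Vn n → Prop) [DecidablePred p] :
    ∑ x : Vn n, (if p x then (-1:ℤ) else 1)
      = 2 ^ n - 2 * ((Finset.univ.filter p).card : ℤ) := by
  have h : ∀ x : Vn n, (if p x then (-1:ℤ) else 1) = 1 - 2 * (if p x then 1 else 0) := by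
    intro x; split_ifs <;> ring
  rw [Finset.sum_congr rfl fun x _ => h x, Finset.sum_sub_distrib, ← Finset.mul_sum,
    Finset.sum_boole]
  simp [card_Vn]

lemma W_eq (α : Vn n) : W g α = 2 ^ n - 2 * (D g α 0 : ℤ) := by
  have h : ∀ x : Vn n, χ (g x + dot α x)
      = if g x ≠ dot α x + 0 then (-1:ℤ) else 1 := by
    intro x
    rw [χ_eq_ite]
    by_cases h' : g x = dot α x
    · simp [h']
    · simp [h']
  rw [W, Finset.sum_congr rfl fun x _ => h x, sum_pm]
  rfl

lemma D_add (α : Vn n) : D g α 0 + D g α 1 = 2 ^ n := by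
  have h : ∀ x : Vn n, (g x ≠ dot α x + 1) ↔ ¬ (g x ≠ dot α x + 0) := by
    intro x
    generalize g x = u; generalize dot α x = w
    revert w; revert u; decide
  have h2 : D g α 1 = (Finset.univ.filter (fun x => ¬ (g x ≠ dot α x + 0))).card := by
    unfold D
    congr 1
    exact Finset.filter_congr fun x _ => by simpa using h x
  rw [h2]
  unfold D
  have h3 := Finset.card_filter_add_card_filter_not
    (s := (Finset.univ : Finset (Vn n))) (p := fun x => g x ≠ dot α x + 0)
  rw [Finset.card_univ, card_Vn] at h3
  convert h3 using 3

lemma caseA_bound (hD : ∀ α c, 2 ≤ D g α c) :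
    ∑ a : Vn n, (Δ g a) ^ 2 ≤ 2 ^ n * ((2:ℤ) ^ n - 4) ^ 2 := by
  have hW : ∀ α, (W g α) ^ 2 ≤ ((2:ℤ) ^ n - 4) ^ 2 := by
    intro α
    have h0 := hD α 0
    have h1 := hD α 1
    have hsum := D_add g α
    have hWeq := W_eq g α
    have hle : W g α ≤ 2 ^ n - 4 := by
      rw [hWeq]
      have : (2:ℤ) ≤ (D g α 0 : ℤ) := by exact_mod_cast h0
      linarith
    have hge : (4:ℤ) - 2 ^ n ≤ W g α := by
      rw [hWeq]
      have hc : (D g α 0 : ℤ) + (D g α 1 : ℤ) = 2 ^ n := by exact_mod_cast hsum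
      have : (2:ℤ) ≤ (D g α 1 : ℤ) := by exact_mod_cast h1
      linarith
    exact sq_le_sq' (by linarith) hle
  have hterm : ∀ α : Vn n, (W g α) ^ 4 ≤ ((2:ℤ) ^ n - 4) ^ 2 * (W g α) ^ 2 := by
    intro α
    nlinarith [hW α, sq_nonneg (W g α)]
  have hb : ∑ α : Vn n, (W g α) ^ 4 ≤ ((2:ℤ) ^ n - 4) ^ 2 * 2 ^ (2 * n) := by
    calc ∑ α : Vn n, (W g α) ^ 4 ≤ ∑ α : Vn n, ((2:ℤ) ^ n - 4) ^ 2 * (W g α) ^ 2 :=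
          Finset.sum_le_sum fun α _ => hterm α
      _ = ((2:ℤ) ^ n - 4) ^ 2 * 2 ^ (2 * n) := by rw [← Finset.mul_sum, parseval]
  have hkey : 2 ^ n * ∑ a : Vn n, (Δ g a) ^ 2 = ∑ α : Vn n, (W g α) ^ 4 := by
    rw [sum_W4, sum_Δsq]
  have h2n : ((2:ℤ) ^ n - 4) ^ 2 * 2 ^ (2 * n)
      = 2 ^ n * (2 ^ n * ((2:ℤ) ^ n - 4) ^ 2) := by rw [two_mul, pow_add]; ring
  have := hkey ▸ hb
  rw [h2n] at this
  have hpos : (0:ℤ) < 2 ^ n := by positivity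
  exact le_of_mul_le_mul_left this hpos

lemma Δ_zero : Δ g 0 = 2 ^ n := by
  unfold Δ
  have h : ∀ x : Vn n, χ (g (x + 0) + g x) = 1 := by
    intro x
    rw [add_zero, zmod2_add_self, χ_zero]
  rw [Finset.sum_congr rfl fun x _ => h x]
  simp [card_Vn]

lemma caseB_Δ (α : Vn n) (c : ZMod 2) (u : Vn n)
    (hrep : ∀ x, g x = dot α x + c + (if x = u then 1 else 0))
    (a : Vn n) (ha : a ≠ 0) :
    (Δ g a) ^ 2 = ((2:ℤ) ^ n - 4) ^ 2 := by
  set e : Vn n → ZMod 2 := fun x => if x = u then 1 else 0 with he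
  have hz : ∀ d1 d2 cc e1 e2 : ZMod 2,
      (d1 + d2 + cc + e1) + (d1 + cc + e2) = d2 + (e1 + e2) := by decide
  have harg : ∀ x : Vn n, g (x + a) + g x = dot α a + (e (x + a) + e x) := by
    intro x
    rw [hrep (x + a), hrep x, dot_add_right]
    exact hz _ _ _ _ _
  have hΔ : Δ g a = χ (dot α a) * ∑ x : Vn n, χ (e (x + a) + e x) := by
    rw [Δ, Finset.mul_sum]
    exact Finset.sum_congr rfl fun x _ => by rw [harg x, χ_add]
  have hua : u + a ≠ u := fun h => ha (by rwa [add_eq_left] at h)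
  have hite : ∀ x : Vn n, χ (e (x + a) + e x)
      = if (x = u ∨ x = u + a) then (-1:ℤ) else 1 := by
    intro x
    by_cases hx : x = u
    · subst hx
      have h1 : e (x + a) = 0 := if_neg (fun h => hua h)
      have h2 : e x = 1 := if_pos rfl
      rw [h1, h2, zero_add, χ_one, if_pos (Or.inl rfl)]
    · by_cases hx' : x = u + a
      · subst hx'
        have h1 : u + a + a = u := by rw [add_assoc, vadd_self, add_zero]
        have h2 : e (u + a + a) = 1 := by rw [h1]; exact if_pos rfl
        have h3 : e (u + a) = 0 := if_neg hua
        rw [h2, h3, add_zero, χ_one, if_pos (Or.inr rfl)]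
      · have h1 : x + a ≠ u := by
          intro h
          apply hx'
          rw [← h, add_assoc, vadd_self, add_zero]
        rw [show e (x + a) = 0 from if_neg h1, show e x = 0 from if_neg hx,
          add_zero, χ_zero, if_neg (by tauto)]
  have hcard : (Finset.univ.filter (fun x : Vn n => x = u ∨ x = u + a)).card = 2 := by
    have hset : Finset.univ.filter (fun x : Vn n => x = u ∨ x = u + a)
        = ({u, u + a} : Finset (Vn n)) := by
      ext x; simp [Finset.mem_insert]
    rw [hset, Finset.card_insert_of_notMem
        (fun h => hua (Finset.mem_singleton.mp h).symm),
      Finset.card_singleton]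
  have hT : ∑ x : Vn n, χ (e (x + a) + e x) = 2 ^ n - 4 := by
    rw [Finset.sum_congr rfl fun x _ => hite x, sum_pm, hcard]
    norm_num
  rw [hΔ, hT, mul_pow, χ_sq, one_mul]

lemma caseB (α : Vn n) (c : ZMod 2) (u : Vn n)
    (hrep : ∀ x, g x = dot α x + c + (if x = u then 1 else 0)) :
    ∑ a : Vn n, (Δ g a) ^ 2
      = 2 ^ (2 * n) + ((2:ℤ) ^ n - 1) * ((2:ℤ) ^ n - 4) ^ 2 := by
  rw [← Finset.add_sum_erase Finset.univ _ (Finset.mem_univ (0 : Vn n))]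
  have h1 : (Δ g 0) ^ 2 = 2 ^ (2 * n) := by
    rw [Δ_zero, ← pow_mul, mul_comm]
  have h2 : ∑ a ∈ Finset.univ.erase (0 : Vn n), (Δ g a) ^ 2
      = ((2:ℤ) ^ n - 1) * ((2:ℤ) ^ n - 4) ^ 2 := by
    rw [Finset.sum_congr rfl fun a ha => caseB_Δ g α c u hrep a (Finset.mem_erase.mp ha).1]
    rw [Finset.sum_const, Finset.card_erase_of_mem (Finset.mem_univ _), Finset.card_univ,
      card_Vn, nsmul_eq_mul]
    congr 1
    have : 1 ≤ 2 ^ n := Nat.one_le_two_pow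
    push_cast [this]
    ring
  rw [h1, h2]

lemma ncard_eq_D (α : Vn n) (c : ZMod 2) :
    ({x : Vn n | g x ≠ dot α x + c} : Set (Vn n)).ncard = D g α c := by
  classical
  rw [Set.ncard_eq_toFinset_card', Set.toFinset_setOf]
  unfold D
  congr 1

lemma main' (hg : ¬ ∃ (a : Vn n) (c : ZMod 2), ∀ x, g x = dot a x + c) :
    (∑ a : Vn n, (Δ g a) ^ 2 ≤ 2 ^ (2 * n) + ((2:ℤ) ^ n - 1) * ((2:ℤ) ^ n - 4) ^ 2) ∧
    ((∑ a : Vn n, (Δ g a) ^ 2 = 2 ^ (2 * n) + ((2:ℤ) ^ n - 1) * ((2:ℤ) ^ n - 4) ^ 2) ↔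
      ∃ (a : Vn n) (c : ZMod 2), ({x : Vn n | g x ≠ dot a x + c} : Set (Vn n)).ncard = 1) := by
  have hn : 2 ≤ n := by
    by_contra hlt
    push_neg at hlt
    interval_cases n
    · exact hg ((by decide :
        ∀ g0 : Vn 0 → ZMod 2, ∃ (a : Vn 0) (c : ZMod 2), ∀ x, g0 x = dot a x + c) g)
    · exact hg ((by decide :
        ∀ g0 : Vn 1 → ZMod 2, ∃ (a : Vn 1) (c : ZMod 2), ∀ x, g0 x = dot a x + c) g)
  have hN4 : (4:ℤ) ≤ 2 ^ n := by
    calc (4:ℤ) = 2 ^ 2 := by norm_num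
    _ ≤ 2 ^ n := pow_le_pow_right₀ (by norm_num) hn
  have hD1 : ∀ α c, 1 ≤ D g α c := by
    intro α c
    rcases Nat.eq_zero_or_pos (D g α c) with h | h
    · exfalso
      apply hg
      refine ⟨α, c, fun x => ?_⟩
      have hemp := Finset.card_eq_zero.mp h
      have := Finset.filter_eq_empty_iff.mp hemp (Finset.mem_univ x)
      simpa using this
    · exact h
  by_cases hB : ∃ α c, D g α c = 1
  · obtain ⟨α, c, hd⟩ := hB
    obtain ⟨u, hu⟩ := Finset.card_eq_one.mp hd
    have hiff : ∀ x : Vn n, (g x ≠ dot α x + c) ↔ x = u := by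
      intro x
      have := Finset.ext_iff.mp hu x
      simpa using this
    have hrep : ∀ x, g x = dot α x + c + (if x = u then 1 else 0) := by
      intro x
      by_cases hx : x = u
      · rw [if_pos hx]
        have hne : g x ≠ dot α x + c := (hiff x).mpr hx
        have := (zmod2_ne_iff _ _).mp hne
        rw [this, add_assoc]
      · rw [if_neg hx, add_zero]
        by_contra hne
        exact hx ((hiff x).mp hne)
    have heq := caseB g α c u hrep
    refine ⟨le_of_eq heq, iff_of_true heq ⟨α, c, ?_⟩⟩
    rw [ncard_eq_D]
    exact hd
  · push_neg at hB
    have hD2 : ∀ α c, 2 ≤ D g α c := by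
      intro α c
      have := hD1 α c
      have := hB α c
      omega
    have hbound := caseA_bound g hD2
    have h2n : (2:ℤ) ^ (2 * n) = 2 ^ n * 2 ^ n := by rw [two_mul, pow_add]
    have hstrict : (2:ℤ) ^ n * ((2:ℤ) ^ n - 4) ^ 2
        < 2 ^ (2 * n) + ((2:ℤ) ^ n - 1) * ((2:ℤ) ^ n - 4) ^ 2 := by
      rw [h2n]
      nlinarith [hN4]
    refine ⟨le_trans hbound hstrict.le, iff_of_false (by linarith [lt_of_le_of_lt hbound hstrict]) ?_⟩
    rintro ⟨α, c, hnc⟩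
    rw [ncard_eq_D] at hnc
    exact hB α c hnc

end FMB

theorem fourth_moment_bound (n : ℕ) (g : (Fin n → ZMod 2) → ZMod 2)
    (hg : ¬ ∃ (a : Fin n → ZMod 2) (c : ZMod 2), ∀ x, g x = (∑ i, a i * x i) + c) :
    (∑ a : Fin n → ZMod 2,
        (∑ x : Fin n → ZMod 2, (-1 : ℤ) ^ (g (x + a) + g x).val) ^ 2)
      ≤ 2 ^ (2 * n) + (2 ^ n - 1) * (2 ^ n - 4) ^ 2 ∧
    ((∑ a : Fin n → ZMod 2,
        (∑ x : Fin n → ZMod 2, (-1 : ℤ) ^ (g (x + a) + g x).val) ^ 2)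
      = 2 ^ (2 * n) + (2 ^ n - 1) * (2 ^ n - 4) ^ 2 ↔
      ∃ (a : Fin n → ZMod 2) (c : ZMod 2),
        ({x : Fin n → ZMod 2 | g x ≠ (∑ i, a i * x i) + c} : Set (Fin n → ZMod 2)).ncard = 1) := by
  exact FMB.main' g hg
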